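/- Let P, Q : ℤ × ℝ → ℝ be differentiable in the time variable t with P(n,t) ≠ 0 for all n, t, and suppose they satisfy the first positive flow of the Ablowitz–Ladik hierarchy: ∂ₜP(n) = P(n)(Q(n+1) − Q(n)) and ∂ₜQ(n) = Q(n)(Q(n+1) − Q(n−1) − P(n) + P(n−1)). Then P̂(n,t) = 1/P(n,t) and Q̂(n,t) = Q(n+1,t)/(P(n,t)P(n+1,t)) satisfy ∂ₜP̂(n) = Q̂(n−1)/P̂(n−1) − Q̂(n)/P̂(n+1) and ∂ₜQ̂(n) = Q̂(n)/P̂(n) − Q̂(n)/P̂(n+1); that is, under the transformation P → 1/P, Q → Q⁺/(PP⁺) together with the reversal of the shift, the first positive flow becomes the first negative flow P_{s₀} = Q⁺/P⁺ − Q/P⁻, Q_{s₀} = Q/P − Q/P⁻. -/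

import Mathlib

/-- Under the transformation `P → 1/P`, `Q → Q⁺/(PP⁺)` together with the
reversal of the shift, the first positive flow `P_{t₀} = P(Q⁺ − Q)`,
`Q_{t₀} = Q(Q⁺ − Q⁻ − P + P⁻)` of the Ablowitz–Ladik hierarchy becomes the first negative
flow `P_{s₀} = Q⁺/P⁺ − Q/P⁻`, `Q_{s₀} = Q/P − Q/P⁻`. -/
theorem first_positive_flow_to_negative_flow
    (P Q : ℤ → ℝ → ℝ)
    (hP : ∀ (n : ℤ) (t : ℝ), P n t ≠ 0)
    (hflowP : ∀ (n : ℤ) (t : ℝ),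
      HasDerivAt (P n) (P n t * (Q (n + 1) t - Q n t)) t)
    (hflowQ : ∀ (n : ℤ) (t : ℝ),
      HasDerivAt (Q n) (Q n t * (Q (n + 1) t - Q (n - 1) t - P n t + P (n - 1) t)) t)
    (Phat Qhat : ℤ → ℝ → ℝ)
    (hPhat : ∀ (n : ℤ) (t : ℝ), Phat n t = 1 / P n t)
    (hQhat : ∀ (n : ℤ) (t : ℝ), Qhat n t = Q (n + 1) t / (P n t * P (n + 1) t)) :
    ∀ (n : ℤ) (t : ℝ),
      HasDerivAt (Phat n) (Qhat (n - 1) t / Phat (n - 1) t - Qhat n t / Phat (n + 1) t) t ∧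
      HasDerivAt (Qhat n) (Qhat n t / Phat n t - Qhat n t / Phat (n + 1) t) t := by
  intro n t
  have hPfun : ∀ m : ℤ, Phat m = fun s => (P m s)⁻¹ := fun m =>
    funext fun s => by rw [hPhat m s, one_div]
  have hQfun : ∀ m : ℤ, Qhat m = fun s => Q (m + 1) s / (P m s * P (m + 1) s) := fun m =>
    funext fun s => hQhat m s
  constructor
  · rw [hPfun n]
    have h := (hflowP n t).inv (hP n t)
    convert h using 1
    · rfl
    · rfl
    · rfl
    rw [hQhat, hQhat, hPhat, hPhat]
    have h1 : n - 1 + 1 = n := by ring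
    rw [h1]
    field_simp [hP n t, hP (n - 1) t, hP (n + 1) t]
    ring
  · rw [hQfun n]
    have h := (hflowQ (n + 1) t).div ((hflowP n t).mul (hflowP (n + 1) t))
      (mul_ne_zero (hP n t) (hP (n + 1) t))
    convert h using 1
    · rfl
    · rfl
    · rfl
    beta_reduce
    rw [hPhat, hPhat]
    have h1 : n + 1 - 1 = n := by ring
    rw [h1]
    simp only [Pi.mul_apply]
    field_simp [hP n t, hP (n + 1) t]
    ring
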